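/- The discrepancy φ(a) = ‖A(A*A+aI)^{-1}A*f_δ − f_δ‖ satisfies lim_{a→∞} φ(a) = ‖f_δ‖ and, if f_δ = f + e with f ∈ closure(Range A) and ‖e‖ ≤ δ, lim_{a→0⁺} φ(a) ≤ δ. Consequently, if ‖f_δ‖ > δ, there exists a > 0 with φ(a) = c·δ for any c with lim_{a→0}φ(a) < cδ < ‖f_δ‖ (by continuity of φ). -/

import Mathlib

open ContinuousLinearMap Filter

section aux
variable {H : Type*} [NormedAddCommGroup H] [InnerProductSpace ℝ H] [CompleteSpace H]

local notation "⟪" x ", " y "⟫" => @inner ℝ _ _ x y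

lemma tik_norm_le (A : H →L[ℝ] H) {a : ℝ} (ha : 0 < a) {x y : H}
    (h : adjoint A (A x) + a • x = y) : ‖x‖ ≤ ‖y‖ / a := by
  have h1 : ⟪y, x⟫ = ‖A x‖ ^ 2 + a * ‖x‖ ^ 2 := by
    rw [← h, inner_add_left, adjoint_inner_left, real_inner_self_eq_norm_sq,
      real_inner_smul_left, real_inner_self_eq_norm_sq]
  have h2 : ⟪y, x⟫ ≤ ‖y‖ * ‖x‖ := real_inner_le_norm y x
  rw [le_div_iff₀ ha]
  rcases (norm_nonneg x).eq_or_lt with h0 | h0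
  · rw [← h0]; simpa using norm_nonneg y
  · nlinarith [sq_nonneg ‖A x‖]

lemma tik_min (A : H →L[ℝ] H) (fδ : H) {a : ℝ} (ha : 0 ≤ a) {ua : H}
    (h : adjoint A (A ua) + a • ua = adjoint A fδ) (v : H) :
    ‖A ua - fδ‖ ^ 2 + a * ‖ua‖ ^ 2 ≤ ‖A v - fδ‖ ^ 2 + a * ‖v‖ ^ 2 := by
  set w := v - ua with hw
  have hv : v = ua + w := by simp [hw]
  have h1 : A v - fδ = (A ua - fδ) + A w := by rw [hv]; simp; abel
  have e1 : ‖A v - fδ‖ ^ 2 = ‖A ua - fδ‖ ^ 2 + 2 * ⟪A ua - fδ, A w⟫ + ‖A w‖ ^ 2 := by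
    rw [h1, norm_add_sq_real]
  have e2 : ‖v‖ ^ 2 = ‖ua‖ ^ 2 + 2 * ⟪ua, w⟫ + ‖w‖ ^ 2 := by
    rw [hv, norm_add_sq_real]
  have hz : adjoint A (A ua) + a • ua - adjoint A fδ = 0 := sub_eq_zero.mpr h
  have cross : ⟪A ua - fδ, A w⟫ + a * ⟪ua, w⟫ = 0 := by
    have hc : ⟪A ua - fδ, A w⟫ + a * ⟪ua, w⟫
        = ⟪adjoint A (A ua) + a • ua - adjoint A fδ, w⟫ := by
      rw [← adjoint_inner_left, map_sub]
      simp [inner_sub_left, inner_add_left, real_inner_smul_left]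
      ring
    rw [hc, hz, inner_zero_left]
  nlinarith [sq_nonneg ‖A w‖, mul_nonneg ha (sq_nonneg ‖w‖)]

end aux
theorem discrepancy_limits_and_existence
    {H : Type*} [NormedAddCommGroup H] [InnerProductSpace ℝ H] [CompleteSpace H]
    (A : H →L[ℝ] H) (f e fδ : H) (δ : ℝ) (hδ : 0 < δ)
    (hf : f ∈ closure (Set.range A)) (hfδ : fδ = f + e) (he : ‖e‖ ≤ δ)
    (u : ℝ → H)
    (hu : ∀ a > (0:ℝ), (adjoint A).comp A (u a) + a • (u a) = adjoint A fδ)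
    (hnorm : δ < ‖fδ‖) :
    Tendsto (fun a => ‖A (u a) - fδ‖) atTop (nhds ‖fδ‖) ∧
    ∃ L : ℝ,
      Tendsto (fun a => ‖A (u a) - fδ‖) (nhdsWithin 0 (Set.Ioi 0)) (nhds L) ∧
      L ≤ δ ∧
      ∀ c : ℝ, L < c * δ → c * δ < ‖fδ‖ →
        ∃ a > (0:ℝ), ‖A (u a) - fδ‖ = c * δ := by
  have hue : ∀ a > (0:ℝ), adjoint A (A (u a)) + a • u a = adjoint A fδ := by
    intro a ha
    simpa using hu a ha
  set N := ‖adjoint A fδ‖ with hN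
  have hbd : ∀ a > (0:ℝ), ‖u a‖ ≤ N / a := fun a ha => tik_norm_le A ha (hue a ha)
  -- Part 1 : limit at infinity
  have part1 : Tendsto (fun a => ‖A (u a) - fδ‖) atTop (nhds ‖fδ‖) := by
    rw [tendsto_iff_dist_tendsto_zero]
    apply squeeze_zero' (Eventually.of_forall fun a => dist_nonneg)
      (g := fun a => (‖A‖ * N) / a)
    · filter_upwards [eventually_gt_atTop (0:ℝ)] with a ha
      calc dist ‖A (u a) - fδ‖ ‖fδ‖ = |‖A (u a) - fδ‖ - ‖-fδ‖| := by
            rw [Real.dist_eq, norm_neg]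
        _ ≤ ‖(A (u a) - fδ) - (-fδ)‖ := abs_norm_sub_norm_le _ _
        _ = ‖A (u a)‖ := by congr 1; abel
        _ ≤ ‖A‖ * ‖u a‖ := A.le_opNorm _
        _ ≤ ‖A‖ * (N / a) := by
            exact mul_le_mul_of_nonneg_left (hbd a ha) (norm_nonneg _)
        _ = (‖A‖ * N) / a := by ring
    · exact Tendsto.div_atTop tendsto_const_nhds tendsto_id
  refine ⟨part1, ?_⟩
  -- monotonicity
  have hmono : MonotoneOn (fun a => ‖A (u a) - fδ‖) (Set.Ioi 0) := by
    intro a ha b hb hab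
    rcases eq_or_lt_of_le hab with rfl | hlt
    · exact le_refl _
    have h1 := tik_min A fδ (le_of_lt ha) (hue a ha) (u b)
    have h2 := tik_min A fδ (le_of_lt hb) (hue b hb) (u a)
    simp only
    have hba : 0 < b - a := sub_pos.mpr hlt
    have ht : ‖u b‖ ^ 2 ≤ ‖u a‖ ^ 2 := by nlinarith [h1, h2, hba]
    have hs : ‖A (u a) - fδ‖ ^ 2 ≤ ‖A (u b) - fδ‖ ^ 2 := by
      nlinarith [mul_nonneg (le_of_lt (Set.mem_Ioi.mp ha)) (sub_nonneg.mpr ht)]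
    nlinarith [norm_nonneg (A (u a) - fδ), norm_nonneg (A (u b) - fδ)]
  have hbdd : BddBelow ((fun a => ‖A (u a) - fδ‖) '' Set.Ioi 0) := by
    refine ⟨0, ?_⟩
    rintro x ⟨a, -, rfl⟩
    exact norm_nonneg _
  have hne : ((fun a => ‖A (u a) - fδ‖) '' Set.Ioi 0).Nonempty :=
    ⟨_, ⟨1, by norm_num, rfl⟩⟩
  set L := sInf ((fun a => ‖A (u a) - fδ‖) '' Set.Ioi 0) with hLdef
  have hL : Tendsto (fun a => ‖A (u a) - fδ‖) (nhdsWithin 0 (Set.Ioi 0)) (nhds L) :=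
    hmono.tendsto_nhdsGT hbdd
  -- L ≤ δ
  have hLδ : L ≤ δ := by
    rw [hLdef, Real.sInf_le_iff hbdd hne]
    intro ε hε
    obtain ⟨y, ⟨w, rfl⟩, hdist⟩ := Metric.mem_closure_iff.mp hf (ε/2) (by positivity)
    have hwf : ‖A w - f‖ < ε / 2 := by
      rw [← dist_eq_norm, dist_comm]; exact hdist
    have hAwfδ : ‖A w - fδ‖ ≤ δ + ε / 2 := by
      have h1 : A w - fδ = (A w - f) - e := by rw [hfδ]; abel
      rw [h1]
      calc ‖(A w - f) - e‖ ≤ ‖A w - f‖ + ‖e‖ := norm_sub_le _ _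
        _ ≤ δ + ε / 2 := by linarith
    set d := ((δ + ε) ^ 2 - (δ + ε / 2) ^ 2) / 2 with hd
    have hdpos : 0 < d := by rw [hd]; nlinarith
    set a := d / (‖w‖ ^ 2 + 1) with ha
    have hapos : 0 < a := by positivity
    have haw : a * ‖w‖ ^ 2 ≤ d := by
      rw [ha, div_mul_eq_mul_div, div_le_iff₀ (by positivity)]
      nlinarith [sq_nonneg ‖w‖]
    have hmin := tik_min A fδ (le_of_lt hapos) (hue a hapos) w
    have hsq : ‖A (u a) - fδ‖ ^ 2 < (δ + ε) ^ 2 := by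
      have hb2 : ‖A w - fδ‖ ^ 2 ≤ (δ + ε / 2) ^ 2 :=
        pow_le_pow_left₀ (norm_nonneg _) hAwfδ 2
      nlinarith [mul_nonneg hapos.le (sq_nonneg ‖u a‖)]
    have hlt : ‖A (u a) - fδ‖ < δ + ε :=
      lt_of_pow_lt_pow_left₀ 2 (by positivity) hsq
    exact ⟨‖A (u a) - fδ‖, ⟨a, hapos, rfl⟩, hlt⟩
  refine ⟨L, hL, hLδ, ?_⟩
  -- intermediate value
  intro c hc1 hc2
  obtain ⟨a₀, h₀lt, h₀pos⟩ :=
    ((hL.eventually_lt_const hc1).and eventually_mem_nhdsWithin).exists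
  obtain ⟨a₁, h₁gt, h₁ge, h₁pos⟩ :=
    ((part1.eventually_const_lt hc2).and
      ((eventually_ge_atTop a₀).and (eventually_gt_atTop 0))).exists
  have h₀pos' : (0:ℝ) < a₀ := h₀pos
  -- continuity on Icc a₀ a₁
  have hlip : LipschitzOnWith (Real.toNNReal (‖A‖ * (N / a₀) / a₀))
      (fun a => ‖A (u a) - fδ‖) (Set.Icc a₀ a₁) := by
    apply LipschitzOnWith.of_dist_le_mul
    intro x hx y hy
    have hxpos : 0 < x := lt_of_lt_of_le h₀pos' hx.1
    have hypos : 0 < y := lt_of_lt_of_le h₀pos' hy.1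
    have hdiff : adjoint A (A (u x - u y)) + x • (u x - u y) = (y - x) • u y := by
      have e1 := hue x hxpos
      have e2 := hue y hypos
      have h3 : adjoint A (A (u x)) = adjoint A fδ - x • u x := by
        rw [← e1]; abel
      have h4 : adjoint A (A (u y)) = adjoint A fδ - y • u y := by
        rw [← e2]; abel
      rw [map_sub, map_sub, h3, h4, sub_smul, smul_sub]
      abel
    have hux : ‖u x - u y‖ ≤ ‖(y - x) • u y‖ / x := tik_norm_le A hxpos hdiff
    have huy : ‖u y‖ ≤ N / a₀ := by
      calc ‖u y‖ ≤ N / y := hbd y hypos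
        _ ≤ N / a₀ := by
            apply div_le_div_of_nonneg_left _ h₀pos' hy.1
            · exact norm_nonneg _
    have hest : ‖u x - u y‖ ≤ (N / a₀) / a₀ * |y - x| := by
      calc ‖u x - u y‖ ≤ ‖(y - x) • u y‖ / x := hux
        _ = |y - x| * ‖u y‖ / x := by rw [norm_smul, Real.norm_eq_abs]
        _ ≤ |y - x| * (N / a₀) / a₀ := by
            apply div_le_div₀ (by positivity)
              (mul_le_mul_of_nonneg_left huy (abs_nonneg _)) h₀pos' hx.1
        _ = (N / a₀) / a₀ * |y - x| := by ring
    have hK : (Real.toNNReal (‖A‖ * (N / a₀) / a₀) : ℝ) = ‖A‖ * (N / a₀) / a₀ := by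
      rw [Real.coe_toNNReal]
      positivity
    rw [Real.dist_eq, Real.dist_eq, hK]
    calc |‖A (u x) - fδ‖ - ‖A (u y) - fδ‖| ≤ ‖(A (u x) - fδ) - (A (u y) - fδ)‖ :=
          abs_norm_sub_norm_le _ _
      _ = ‖A (u x - u y)‖ := by rw [map_sub]; congr 1; abel
      _ ≤ ‖A‖ * ‖u x - u y‖ := A.le_opNorm _
      _ ≤ ‖A‖ * ((N / a₀) / a₀ * |y - x|) :=
          mul_le_mul_of_nonneg_left hest (norm_nonneg _)
      _ = ‖A‖ * (N / a₀) / a₀ * |x - y| := by rw [abs_sub_comm]; ring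
  have hcont : ContinuousOn (fun a => ‖A (u a) - fδ‖) (Set.Icc a₀ a₁) :=
    hlip.continuousOn
  obtain ⟨x, hx, hfx⟩ := intermediate_value_Icc h₁ge hcont ⟨h₀lt.le, h₁gt.le⟩
  exact ⟨x, lt_of_lt_of_le h₀pos' hx.1, hfx⟩
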